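/- Let p be an odd prime and m ≥ 2. The set X = {x ∈ GF(p^{2m}) \ {0} : Tr_{m/1}(x^{p^m+1}) = 0} is a (p^{2m}, p^{2m-1} − p^{m-1}(p−1) − 1, p^{2m-2} − p^{m-1}(p−1) − 2, p^{2m-2} − p^{m-1}) partial difference set in the additive group of GF(p^{2m}). -/

import Mathlib

set_option linter.unusedSectionVars false
set_option maxHeartbeats 1000000


/-- The trace-like map x ↦ x + x^p + ... + x^(p^(m-1)), computed inside the big field. -/
def fieldTr (p m : ℕ) {F : Type} [Field F] (x : F) : F :=
  ∑ i ∈ Finset.range m, x ^ p ^ i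

/-- D is a (v,k,λ,μ) partial difference set in the finite abelian group G. -/
def IsPDS {G : Type} [AddCommGroup G] [Fintype G] [DecidableEq G]
    (D : Finset G) (v k l μ : ℕ) : Prop :=
  Fintype.card G = v ∧ D.card = k ∧
    ∀ g : G, g ≠ 0 →
      ((D ×ˢ D).filter (fun q => q.1 - q.2 = g)).card = if g ∈ D then l else μ

namespace DennistonAux

open Finset Polynomial

/-! ### Character sum lemmas over ℂ -/

section Char

variable {p : ℕ} [Fact p.Prime] {ζ : ℂ}

lemma zeta_pow_mod (hζ : IsPrimitiveRoot ζ p) (n : ℕ) : ζ ^ (n % p) = ζ ^ n := by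
  conv_rhs => rw [← Nat.div_add_mod n p, pow_add, pow_mul, hζ.pow_eq_one, one_pow, one_mul]

lemma zeta_val_add (hζ : IsPrimitiveRoot ζ p) (s t : ZMod p) :
    ζ ^ (s + t).val = ζ ^ s.val * ζ ^ t.val := by
  haveI : NeZero p := ⟨(Fact.out : p.Prime).ne_zero⟩
  rw [ZMod.val_add, zeta_pow_mod hζ, pow_add]

lemma zeta_val_ne_one (hζ : IsPrimitiveRoot ζ p) {t : ZMod p} (ht : t ≠ 0) :
    ζ ^ t.val ≠ 1 := by
  haveI : NeZero p := ⟨(Fact.out : p.Prime).ne_zero⟩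
  intro h
  have hdvd := (hζ.pow_eq_one_iff_dvd t.val).mp h
  have hlt : t.val < p := ZMod.val_lt t
  have : t.val = 0 := Nat.eq_zero_of_dvd_of_lt hdvd hlt
  exact ht (by rwa [ZMod.val_eq_zero] at this)

/-- The key vanishing lemma: if `f` shifts by a fixed nonzero `s` under a
translation preserving `S`, then the character sum vanishes. -/
lemma sum_zeta_shift (hζ : IsPrimitiveRoot ζ p) {α : Type} [DecidableEq α] [AddCommGroup α]
    (S : Finset α) (f : α → ZMod p) (a₀ : α)
    (hmem : ∀ a ∈ S, a + a₀ ∈ S) (hmem' : ∀ a ∈ S, a - a₀ ∈ S)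
    {s : ZMod p} (hs : s ≠ 0) (hf : ∀ a ∈ S, f (a + a₀) = f a + s) :
    ∑ a ∈ S, ζ ^ (f a).val = 0 := by
  have key : ∑ a ∈ S, ζ ^ (f a).val = ∑ a ∈ S, ζ ^ (f (a + a₀)).val := by
    refine Finset.sum_nbij' (fun a => a - a₀) (fun a => a + a₀) ?_ ?_ ?_ ?_ ?_
    · exact hmem'
    · exact hmem
    · intro a _; simp
    · intro a _; simp
    · intro a ha; congr 2; simp
  have key2 : ∑ a ∈ S, ζ ^ (f (a + a₀)).val
      = (∑ a ∈ S, ζ ^ (f a).val) * ζ ^ s.val := by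
    rw [Finset.sum_mul]
    refine Finset.sum_congr rfl fun a ha => ?_
    rw [hf a ha, zeta_val_add hζ]
  have h3 : (∑ a ∈ S, ζ ^ (f a).val) * (1 - ζ ^ s.val) = 0 := by
    rw [mul_sub, mul_one, ← key2, ← key, sub_self]
  rcases mul_eq_zero.mp h3 with h | h
  · exact h
  · exact absurd (by linear_combination -h : ζ ^ s.val = 1) (zeta_val_ne_one hζ hs)

lemma sum_zmod_zeta (hζ : IsPrimitiveRoot ζ p) (t : ZMod p) :
    ∑ j : ZMod p, ζ ^ (j * t).val = if t = 0 then (p : ℂ) else 0 := by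
  split_ifs with h
  · subst h; simp [ZMod.card]
  · refine sum_zeta_shift hζ Finset.univ (fun j => j * t) 1 (by simp) (by simp) h ?_
    intro a _; ring

end Char

/-! ### Field-theoretic lemmas -/

section FieldPart

variable {p m : ℕ} [Fact p.Prime] {K : Type} [Field K] [Fintype K] [DecidableEq K] [CharP K p]

lemma hp_prime : p.Prime := Fact.out

lemma ftr_add (r : ℕ) (x y : K) : fieldTr p r (x + y) = fieldTr p r x + fieldTr p r y := by
  unfold fieldTr
  rw [← Finset.sum_add_distrib]
  exact Finset.sum_congr rfl fun i _ => add_pow_char_pow ..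

lemma pow_p_pow_self {a : K} (ha : a ^ p = a) (i : ℕ) : a ^ p ^ i = a := by
  induction i with
  | zero => simp
  | succ n ih => rw [pow_succ, pow_mul, ih, ha]

lemma ftr_smul {a : K} (ha : a ^ p = a) (r : ℕ) (x : K) :
    fieldTr p r (a * x) = a * fieldTr p r x := by
  unfold fieldTr
  rw [Finset.mul_sum]
  exact Finset.sum_congr rfl fun i _ => by rw [mul_pow, pow_p_pow_self ha]

lemma ftr_zero (r : ℕ) : fieldTr p r (0 : K) = 0 := by
  unfold fieldTr
  refine Finset.sum_eq_zero fun i _ => ?_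
  exact zero_pow (pow_ne_zero i (hp_prime (p := p)).ne_zero)

lemma powK (hK : Fintype.card K = p ^ (2 * m)) (x : K) : x ^ p ^ (2 * m) = x := by
  rw [← hK]; exact FiniteField.pow_card x

lemma pow_qq (hK : Fintype.card K = p ^ (2 * m)) (x : K) : (x ^ p ^ m) ^ p ^ m = x := by
  rw [← pow_mul, ← pow_add, ← two_mul, powK hK]

lemma norm_mem (hK : Fintype.card K = p ^ (2 * m)) (x : K) :
    (x ^ (p ^ m + 1)) ^ p ^ m = x ^ (p ^ m + 1) := by
  have h1 : (x ^ (p ^ m + 1)) ^ p ^ m = (x ^ p ^ m) ^ p ^ m * x ^ p ^ m := by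
    rw [pow_add, pow_one, mul_pow]
  rw [h1, pow_qq hK, pow_add, pow_one, mul_comm]

lemma trm_pf {u : K} (hu : u ^ p ^ m = u) :
    (fieldTr p m u) ^ p = fieldTr p m u := by
  unfold fieldTr
  rw [sum_pow_char]
  have h0 : ∀ i, (u ^ p ^ i) ^ p = u ^ p ^ (i + 1) := fun i => by
    rw [← pow_mul, ← pow_succ]
  simp_rw [h0]
  have h1 := Finset.sum_range_succ' (fun i => u ^ p ^ i) m
  have h2 := Finset.sum_range_succ (fun i => u ^ p ^ i) m
  have h3 : u ^ p ^ 0 = u := by norm_num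
  rw [h3] at h1
  rw [hu] at h2
  -- h1 : ∑_{i<m+1} = ∑_{i<m} u^{p^{i+1}} + u ; h2 : ∑_{i<m+1} = ∑_{i<m} + u
  have := h1.symm.trans h2
  linear_combination this

lemma TrK_split (hK : Fintype.card K = p ^ (2 * m)) (w : K) :
    fieldTr p (2 * m) w = fieldTr p m (w + w ^ p ^ m) := by
  rw [ftr_add]
  unfold fieldTr
  rw [two_mul, Finset.sum_range_add]
  congr 1
  exact Finset.sum_congr rfl fun i _ => by rw [← pow_mul, ← pow_add]

lemma Q_pf (hK : Fintype.card K = p ^ (2 * m)) (x : K) :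
    (fieldTr p m (x ^ (p ^ m + 1))) ^ p = fieldTr p m (x ^ (p ^ m + 1)) :=
  trm_pf (norm_mem hK x)

lemma TrK_pf (hK : Fintype.card K = p ^ (2 * m)) (w : K) :
    (fieldTr p (2 * m) w) ^ p = fieldTr p (2 * m) w := by
  rw [TrK_split hK]
  refine trm_pf ?_
  rw [add_pow_char_pow, pow_qq hK, add_comm]

lemma Q_expand (hK : Fintype.card K = p ^ (2 * m)) (x y : K) :
    fieldTr p m ((x + y) ^ (p ^ m + 1))
      = fieldTr p m (x ^ (p ^ m + 1)) + fieldTr p m (y ^ (p ^ m + 1))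
        + fieldTr p (2 * m) (x * y ^ p ^ m) := by
  have hxy : (x + y) ^ (p ^ m + 1)
      = x ^ (p ^ m + 1) + y ^ (p ^ m + 1) + (x ^ p ^ m * y + x * y ^ p ^ m) := by
    rw [pow_add, pow_one, add_pow_char_pow]
    ring
  rw [hxy, ftr_add, ftr_add, TrK_split hK (x * y ^ p ^ m)]
  have h2 : (x * y ^ p ^ m) ^ p ^ m = x ^ p ^ m * y := by
    rw [mul_pow, pow_qq hK]
  rw [h2, ftr_add, ftr_add m (x * y ^ p ^ m) (x ^ p ^ m * y)]
  ring

end FieldPart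

/-! ### The prime field inside K -/

section PrimeField

variable (p : ℕ) [Fact p.Prime] (K : Type) [Field K] [Fintype K] [DecidableEq K] [CharP K p]

def iot : ZMod p →+* K := ZMod.castHom (dvd_refl p) K

noncomputable def ph : K → ZMod p := Function.invFun (iot p K)

variable {p K}

lemma iot_injective : Function.Injective (iot p K) := ZMod.castHom_injective K

lemma iot_pow_p (t : ZMod p) : (iot p K t) ^ p = iot p K t := by
  rw [← map_pow, ZMod.pow_card]

lemma pf_exists {x : K} (hx : x ^ p = x) : ∃ t : ZMod p, iot p K t = x := by
  classical
  set f : Polynomial K := Polynomial.X ^ p - Polynomial.X with hf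
  have hp1 : (1 : ℕ) < p := (hp_prime (p := p)).one_lt
  have hf0 : f ≠ 0 := by
    intro h
    have : f.coeff p = 1 := by
      rw [hf, Polynomial.coeff_sub, Polynomial.coeff_X_pow, Polynomial.coeff_X]
      split_ifs <;> simp_all <;> omega
    rw [h] at this
    simpa using this
  have hdeg : f.natDegree ≤ p := by
    refine le_trans (Polynomial.natDegree_sub_le _ _) ?_
    simp [Polynomial.natDegree_X_pow, Polynomial.natDegree_X]
    omega
  have hroots : ∀ y : K, y ^ p = y → y ∈ f.roots.toFinset := by
    intro y hy
    rw [Multiset.mem_toFinset, Polynomial.mem_roots hf0]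
    simp [hf, Polynomial.IsRoot, sub_eq_zero, hy]
  set S : Finset K := (Finset.univ : Finset (ZMod p)).image (iot p K) with hS
  have hScard : S.card = p := by
    rw [hS, Finset.card_image_of_injective _ iot_injective, Finset.card_univ, ZMod.card]
  have hSsub : S ⊆ f.roots.toFinset := by
    intro y hy
    rw [hS, Finset.mem_image] at hy
    obtain ⟨t, _, rfl⟩ := hy
    exact hroots _ (iot_pow_p t)
  have hrc : f.roots.toFinset.card ≤ p :=
    le_trans (Multiset.toFinset_card_le _) (le_trans (Polynomial.card_roots' f) hdeg)
  have hSeq : S = f.roots.toFinset :=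
    Finset.eq_of_subset_of_card_le hSsub (by omega)
  have hx' : x ∈ S := by rw [hSeq]; exact hroots x hx
  rw [hS, Finset.mem_image] at hx'
  obtain ⟨t, _, ht⟩ := hx'
  exact ⟨t, ht⟩

lemma ph_iot (t : ZMod p) : ph p K (iot p K t) = t :=
  Function.leftInverse_invFun iot_injective t

lemma iot_ph {x : K} (hx : x ^ p = x) : iot p K (ph p K x) = x := by
  obtain ⟨t, rfl⟩ := pf_exists hx
  rw [ph_iot]

lemma ph_zero : ph p K (0 : K) = 0 := by
  have : iot p K 0 = 0 := map_zero _
  rw [← this, ph_iot]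

lemma ph_add {x y : K} (hx : x ^ p = x) (hy : y ^ p = y) :
    ph p K (x + y) = ph p K x + ph p K y := by
  obtain ⟨t, rfl⟩ := pf_exists hx
  obtain ⟨s, rfl⟩ := pf_exists hy
  rw [← map_add, ph_iot, ph_iot, ph_iot]

lemma ph_eq_zero_iff {x : K} (hx : x ^ p = x) : ph p K x = 0 ↔ x = 0 := by
  constructor
  · intro h
    have := iot_ph hx
    rw [h, map_zero] at this
    exact this.symm
  · intro h; rw [h, ph_zero]

lemma ph_iot_mul {x : K} (hx : x ^ p = x) (j : ZMod p) :
    ph p K (iot p K j * x) = j * ph p K x := by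
  obtain ⟨t, rfl⟩ := pf_exists hx
  rw [← map_mul, ph_iot, ph_iot]

lemma pf_add {x y : K} (hx : x ^ p = x) (hy : y ^ p = y) : (x + y) ^ p = x + y := by
  rw [add_pow_char, hx, hy]

end PrimeField

/-! ### Root counting lemmas -/

section Roots

variable {p m : ℕ} [Fact p.Prime] {K : Type} [Field K] [Fintype K] [DecidableEq K] [CharP K p]

lemma exists_ftr_ne (r : ℕ) (hr : 0 < r) (S : Finset K) (hcard : p ^ (r - 1) < S.card) :
    ∃ u ∈ S, fieldTr p r u ≠ 0 := by
  classical
  by_contra hcon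
  push_neg at hcon
  set P : Polynomial K := ∑ i ∈ Finset.range r, Polynomial.X ^ p ^ i with hP
  have hp1 : (1 : ℕ) < p := (hp_prime (p := p)).one_lt
  have hinj : Function.Injective (fun i : ℕ => p ^ i) := fun a b h =>
    Nat.pow_right_injective hp1 h
  have hcoeff : P.coeff (p ^ (r - 1)) = 1 := by
    rw [hP, Polynomial.finset_sum_coeff]
    have h1 : ∀ i ∈ Finset.range r,
        (Polynomial.X ^ p ^ i : Polynomial K).coeff (p ^ (r - 1))
          = if i = r - 1 then 1 else 0 := by
      intro i _
      rw [Polynomial.coeff_X_pow]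
      congr 1
      simp only [eq_iff_iff]
      constructor
      · intro h; exact (hinj h).symm
      · intro h; rw [h]
    rw [Finset.sum_congr rfl h1, Finset.sum_ite_eq' (Finset.range r) (r-1) (fun _ => (1:K))]
    simp [Finset.mem_range]
    omega
  have hP0 : P ≠ 0 := fun h => by simp [h] at hcoeff
  have hdeg : P.natDegree ≤ p ^ (r - 1) := by
    refine Polynomial.natDegree_sum_le_of_forall_le _ _ fun i hi => ?_
    rw [Polynomial.natDegree_X_pow]
    exact Nat.pow_le_pow_right (le_of_lt hp1) (by simp at hi; omega)
  have heval : ∀ u : K, P.eval u = fieldTr p r u := by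
    intro u
    rw [hP, Polynomial.eval_finset_sum]
    unfold fieldTr
    exact Finset.sum_congr rfl fun i _ => by rw [Polynomial.eval_pow, Polynomial.eval_X]
  have hsub : S ⊆ P.roots.toFinset := by
    intro u hu
    rw [Multiset.mem_toFinset, Polynomial.mem_roots hP0]
    show P.eval u = 0
    rw [heval]; exact hcon u hu
  have := Finset.card_le_card hsub
  have := Multiset.toFinset_card_le P.roots
  have := Polynomial.card_roots' P
  omega

lemma card_F (hK : Fintype.card K = p ^ (2 * m)) (hm : 0 < m) :
    ((Finset.univ : Finset K).filter fun x => x ^ p ^ m = x).card = p ^ m := by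
  classical
  set q := p ^ m with hq
  have hp1 : (1 : ℕ) < p := (hp_prime (p := p)).one_lt
  have hq1 : 1 < q := Nat.one_lt_pow (by omega) hp1
  set f : Polynomial K := Polynomial.X ^ q - Polynomial.X with hf
  have hf0 : f ≠ 0 := by
    intro h
    have : f.coeff q = 1 := by
      rw [hf, Polynomial.coeff_sub, Polynomial.coeff_X_pow, Polynomial.coeff_X]
      split_ifs <;> simp_all <;> omega
    rw [h] at this
    simpa using this
  have hFroots : ((Finset.univ : Finset K).filter fun x => x ^ p ^ m = x)
      = f.roots.toFinset := by
    ext x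
    simp only [Finset.mem_filter, Finset.mem_univ, true_and, Multiset.mem_toFinset,
      Polynomial.mem_roots hf0]
    rw [hf]
    simp [Polynomial.IsRoot, sub_eq_zero, hq]
  have hub : f.roots.toFinset.card ≤ q := by
    refine le_trans (Multiset.toFinset_card_le _) (le_trans (Polynomial.card_roots' f) ?_)
    refine le_trans (Polynomial.natDegree_sub_le _ _) ?_
    simp [Polynomial.natDegree_X_pow, Polynomial.natDegree_X]
    omega
  set g : Polynomial K := (Polynomial.X ^ q - Polynomial.X) ^ (q - 1) + Polynomial.C 1 with hg
  have hg0 : g ≠ 0 := by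
    intro h
    have : g.eval 0 = 1 := by
      rw [hg]
      simp [zero_pow (by omega : q ≠ 0), zero_pow (by omega : q - 1 ≠ 0)]
    rw [h] at this
    simpa using this
  have hgdeg : g.natDegree ≤ (q - 1) * q := by
    rw [hg]
    refine le_trans (Polynomial.natDegree_add_le _ _) ?_
    simp only [Polynomial.natDegree_C, max_le_iff]
    constructor
    · refine le_trans (Polynomial.natDegree_pow_le) ?_
      refine Nat.mul_le_mul_left _ ?_
      refine le_trans (Polynomial.natDegree_sub_le _ _) ?_
      simp [Polynomial.natDegree_X_pow, Polynomial.natDegree_X]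
      omega
    · omega
  have hcover : ∀ x : K, x ∈ f.roots.toFinset ∪ g.roots.toFinset := by
    intro x
    set b : K := x ^ q - x with hb
    have hbq : b ^ q = -b := by
      rw [hb, hq, sub_pow_char_pow, pow_qq hK]
      ring
    rcases eq_or_ne b 0 with h0 | h0
    · apply Finset.mem_union_left
      rw [Multiset.mem_toFinset, Polynomial.mem_roots hf0]
      show f.eval x = 0
      rw [hf]
      simp only [Polynomial.eval_sub, Polynomial.eval_pow, Polynomial.eval_X]
      rw [← hb, h0]
    · apply Finset.mem_union_right
      rw [Multiset.mem_toFinset, Polynomial.mem_roots hg0]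
      have hbq1 : b ^ (q - 1) = -1 := by
        have h1 : b ^ (q - 1) * b = b ^ q := by
          rw [← pow_succ]
          congr 1
          omega
        have h2 : b ^ (q - 1) * b = -1 * b := by rw [h1, hbq]; ring
        exact mul_right_cancel₀ h0 h2
      show g.eval x = 0
      rw [hg]
      simp only [Polynomial.eval_add, Polynomial.eval_pow, Polynomial.eval_sub,
        Polynomial.eval_X, Polynomial.eval_C, ← hb]
      rw [hbq1]
      ring
  have hunion : (Finset.univ : Finset K) ⊆ f.roots.toFinset ∪ g.roots.toFinset :=
    fun x _ => hcover x
  have hcards : q * q ≤ f.roots.toFinset.card + (q - 1) * q := by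
    have h1 : (Finset.univ : Finset K).card ≤ (f.roots.toFinset ∪ g.roots.toFinset).card :=
      Finset.card_le_card hunion
    have h2 : (f.roots.toFinset ∪ g.roots.toFinset).card
        ≤ f.roots.toFinset.card + g.roots.toFinset.card := Finset.card_union_le _ _
    have h3 : g.roots.toFinset.card ≤ (q - 1) * q :=
      le_trans (Multiset.toFinset_card_le _) (le_trans (Polynomial.card_roots' g) hgdeg)
    have h4 : (Finset.univ : Finset K).card = q * q := by
      rw [Finset.card_univ, hK, hq, ← pow_add, two_mul]
    omega
  have hkey : q * q = (q - 1) * q + q := by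
    have : q - 1 + 1 = q := by omega
    calc q * q = (q - 1 + 1) * q := by rw [this]
    _ = (q - 1) * q + q := by ring
  rw [hFroots]
  omega

end Roots

/-! ### Norm fibration -/

section NormFiber

variable {p m : ℕ} [Fact p.Prime] {K : Type} [Field K] [Fintype K] [DecidableEq K] [CharP K p]

lemma fiber0 :
    ((Finset.univ : Finset K).filter fun x => x ^ (p ^ m + 1) = 0) = {0} := by
  ext x
  simp only [Finset.mem_filter, Finset.mem_univ, true_and, Finset.mem_singleton]
  rw [pow_eq_zero_iff (by omega : p ^ m + 1 ≠ 0)]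

lemma card_fiber_le (v : K) :
    ((Finset.univ : Finset K).filter fun x => x ^ (p ^ m + 1) = v).card ≤ p ^ m + 1 := by
  classical
  set q := p ^ m with hq
  set f : Polynomial K := Polynomial.X ^ (q + 1) - Polynomial.C v with hf
  have hf0 : f ≠ 0 := Polynomial.X_pow_sub_C_ne_zero (by omega) v
  have hsub : ((Finset.univ : Finset K).filter fun x => x ^ (q + 1) = v)
      ⊆ f.roots.toFinset := by
    intro x hx
    rw [Finset.mem_filter] at hx
    rw [Multiset.mem_toFinset, Polynomial.mem_roots hf0]
    show f.eval x = 0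
    rw [hf]
    simp only [Polynomial.eval_sub, Polynomial.eval_pow, Polynomial.eval_X, Polynomial.eval_C]
    rw [sub_eq_zero]
    exact hx.2
  have h1 := Finset.card_le_card hsub
  have h2 := Multiset.toFinset_card_le f.roots
  have h3 := Polynomial.card_roots' f
  have h4 : f.natDegree = q + 1 := Polynomial.natDegree_X_pow_sub_C
  omega

lemma card_fiber (hK : Fintype.card K = p ^ (2 * m)) (hm : 0 < m)
    {u : K} (hu0 : u ≠ 0) (huF : u ^ p ^ m = u) :
    ((Finset.univ : Finset K).filter fun x => x ^ (p ^ m + 1) = u).card = p ^ m + 1 := by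
  classical
  set q := p ^ m with hq
  set F' : Finset K := (Finset.univ : Finset K).filter (fun w => w ^ p ^ m = w ∧ w ≠ 0)
    with hF'
  have hmaps : ∀ x ∈ (Finset.univ : Finset K).filter (fun x => x ≠ 0),
      x ^ (q + 1) ∈ F' := by
    intro x hx
    rw [Finset.mem_filter] at hx ⊢
    exact ⟨Finset.mem_univ _, norm_mem hK x, pow_ne_zero _ hx.2⟩
  have hpart := Finset.card_eq_sum_card_fiberwise hmaps
  have hL : ((Finset.univ : Finset K).filter (fun x => x ≠ 0)).card = q * q - 1 := by
    rw [Finset.filter_ne', Finset.card_erase_of_mem (Finset.mem_univ 0), Finset.card_univ,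
      hK, hq, ← pow_add, two_mul]
  have hF'card : F'.card = q - 1 := by
    have he : F' = ((Finset.univ : Finset K).filter fun w => w ^ p ^ m = w).erase 0 := by
      ext w
      simp only [hF', Finset.mem_filter, Finset.mem_univ, true_and, Finset.mem_erase]
      tauto
    rw [he, Finset.card_erase_of_mem, card_F hK hm]
    rw [Finset.mem_filter]
    exact ⟨Finset.mem_univ 0, by rw [zero_pow (pow_ne_zero _ (hp_prime (p := p)).ne_zero)]⟩
  have hfib : ∀ v ∈ F',
      (((Finset.univ : Finset K).filter (fun x => x ≠ 0)).filter fun x => x ^ (q+1) = v)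
        = (Finset.univ : Finset K).filter fun x => x ^ (q+1) = v := by
    intro v hv
    rw [hF', Finset.mem_filter] at hv
    ext x
    simp only [Finset.mem_filter, Finset.mem_univ, true_and]
    constructor
    · tauto
    · intro hx
      refine ⟨?_, hx⟩
      intro h0
      rw [h0, zero_pow (by omega : q + 1 ≠ 0)] at hx
      exact hv.2.2 hx.symm
  by_contra hne
  have huF' : u ∈ F' := by
    rw [hF', Finset.mem_filter]
    exact ⟨Finset.mem_univ u, huF, hu0⟩
  have hstrict : (∑ v ∈ F',
      (((Finset.univ : Finset K).filter (fun x => x ≠ 0)).filter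
        fun x => x ^ (q+1) = v).card) < ∑ v ∈ F', (q + 1) := by
    refine Finset.sum_lt_sum (fun v hv => ?_) ⟨u, huF', ?_⟩
    · rw [hfib v hv]; exact card_fiber_le v
    · rw [hfib u huF']
      exact lt_of_le_of_ne (card_fiber_le u) hne
  rw [← hpart, hL, Finset.sum_const, hF'card, smul_eq_mul] at hstrict
  have hq1 : 1 ≤ q := Nat.one_le_pow _ _ (hp_prime (p := p)).pos
  obtain ⟨t, ht⟩ : ∃ t, q = t + 1 := ⟨q - 1, by omega⟩
  rw [ht] at hstrict
  have e0 : t + 1 - 1 = t := by omega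
  rw [e0] at hstrict
  have e1 : (t+1) * (t+1) = t*t + 2*t + 1 := by ring
  have e2 : t * (t + 1 + 1) = t*t + 2*t := by ring
  rw [e1, e2] at hstrict
  omega

lemma image_norm (hK : Fintype.card K = p ^ (2 * m)) (hm : 0 < m) :
    (Finset.univ : Finset K).image (fun x => x ^ (p ^ m + 1))
      = (Finset.univ : Finset K).filter fun u => u ^ p ^ m = u := by
  ext u
  simp only [Finset.mem_image, Finset.mem_filter, Finset.mem_univ, true_and]
  constructor
  · rintro ⟨x, _, rfl⟩
    exact norm_mem hK x
  · intro hu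
    rcases eq_or_ne u 0 with rfl | hu0
    · exact ⟨0, by rw [zero_pow (by omega : p ^ m + 1 ≠ 0)]⟩
    · have := card_fiber hK hm hu0 hu
      have hpos : 0 < ((Finset.univ : Finset K).filter fun x => x ^ (p ^ m + 1) = u).card := by
        omega
      obtain ⟨x, hx⟩ := Finset.card_pos.mp hpos
      rw [Finset.mem_filter] at hx
      exact ⟨x, hx.2⟩

end NormFiber

/-! ### Character sums over K -/

section CharSums

variable {p m : ℕ} [Fact p.Prime] {K : Type} [Field K] [Fintype K] [DecidableEq K]
  [CharP K p] {ζ : ℂ}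

lemma sum_F_zeta (hK : Fintype.card K = p ^ (2 * m)) (hm : 0 < m)
    (hζ : IsPrimitiveRoot ζ p) {j : ZMod p} (hj : j ≠ 0) :
    ∑ u ∈ ((Finset.univ : Finset K).filter fun w => w ^ p ^ m = w),
      ζ ^ (j * ph p K (fieldTr p m u)).val = 0 := by
  have hcard : p ^ (m - 1) <
      ((Finset.univ : Finset K).filter fun w : K => w ^ p ^ m = w).card := by
    rw [card_F hK hm]
    exact Nat.pow_lt_pow_right (hp_prime (p := p)).one_lt (by omega)
  obtain ⟨u₀, hu₀mem, hu₀ne⟩ := exists_ftr_ne m hm _ hcard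
  rw [Finset.mem_filter] at hu₀mem
  have hu₀F : u₀ ^ p ^ m = u₀ := hu₀mem.2
  refine sum_zeta_shift hζ _ _ u₀ ?_ ?_
    (s := j * ph p K (fieldTr p m u₀)) ?_ ?_
  · intro a ha
    rw [Finset.mem_filter] at ha ⊢
    exact ⟨Finset.mem_univ _, by rw [add_pow_char_pow, ha.2, hu₀F]⟩
  · intro a ha
    rw [Finset.mem_filter] at ha ⊢
    exact ⟨Finset.mem_univ _, by rw [sub_pow_char_pow, ha.2, hu₀F]⟩
  · exact mul_ne_zero hj fun h =>
      hu₀ne ((ph_eq_zero_iff (trm_pf hu₀F)).mp h)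
  · intro a ha
    rw [Finset.mem_filter] at ha
    rw [ftr_add, ph_add (trm_pf ha.2) (trm_pf hu₀F), mul_add]

lemma trm_zero_val (hζ : IsPrimitiveRoot ζ p) (j : ZMod p) :
    ζ ^ (j * ph p K (fieldTr p m ((0:K) ^ (p ^ m + 1)))).val = 1 := by
  rw [zero_pow (by omega : p ^ m + 1 ≠ 0), ftr_zero, ph_zero, mul_zero, ZMod.val_zero, pow_zero]

lemma sum_Q_zeta (hK : Fintype.card K = p ^ (2 * m)) (hm : 0 < m)
    (hζ : IsPrimitiveRoot ζ p) {j : ZMod p} (hj : j ≠ 0) :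
    ∑ y : K, ζ ^ (j * ph p K (fieldTr p m (y ^ (p ^ m + 1)))).val = -(p ^ m : ℂ) := by
  classical
  have hcomp := Finset.sum_comp (s := (Finset.univ : Finset K))
    (fun u : K => ζ ^ (j * ph p K (fieldTr p m u)).val) (fun y : K => y ^ (p ^ m + 1))
  rw [image_norm hK hm] at hcomp
  set F : Finset K := (Finset.univ : Finset K).filter fun u => u ^ p ^ m = u with hF
  have h0F : (0 : K) ∈ F := by
    rw [hF, Finset.mem_filter]
    exact ⟨Finset.mem_univ _, by rw [zero_pow (pow_ne_zero _ (hp_prime (p := p)).ne_zero)]⟩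
  rw [← Finset.add_sum_erase F _ h0F] at hcomp
  have hfil0 : ((Finset.univ : Finset K).filter fun a => a ^ (p ^ m + 1) = 0) = {0} :=
    fiber0
  have hcard0 : ((Finset.univ : Finset K).filter fun a => a ^ (p ^ m + 1) = 0).card = 1 := by
    rw [hfil0]; rfl
  have hfibcard : ∀ u ∈ F.erase 0,
      ((Finset.univ : Finset K).filter fun a => a ^ (p ^ m + 1) = u).card = p ^ m + 1 := by
    intro u hu
    rw [Finset.mem_erase, hF, Finset.mem_filter] at hu
    exact card_fiber hK hm hu.1 hu.2.2
  have hsum2 : ∑ u ∈ F.erase 0,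
      ((Finset.univ : Finset K).filter fun a => a ^ (p ^ m + 1) = u).card
        • ζ ^ (j * ph p K (fieldTr p m u)).val
      = (p ^ m + 1 : ℂ) * ∑ u ∈ F.erase 0, ζ ^ (j * ph p K (fieldTr p m u)).val := by
    rw [Finset.mul_sum]
    refine Finset.sum_congr rfl fun u hu => ?_
    rw [hfibcard u hu, nsmul_eq_mul]
    push_cast
    ring
  have hzero : ∑ u ∈ F, ζ ^ (j * ph p K (fieldTr p m u)).val = 0 := sum_F_zeta hK hm hζ hj
  have herase : ∑ u ∈ F.erase 0, ζ ^ (j * ph p K (fieldTr p m u)).val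
      = - ζ ^ (j * ph p K (fieldTr p m (0:K))).val := by
    have := Finset.add_sum_erase F (fun u => ζ ^ (j * ph p K (fieldTr p m u)).val) h0F
    rw [hzero] at this
    linear_combination this
  have hg0 : ζ ^ (j * ph p K (fieldTr p m (0:K))).val = 1 := by
    rw [ftr_zero, ph_zero, mul_zero, ZMod.val_zero, pow_zero]
  rw [hcard0, hsum2, herase, hg0] at hcomp
  rw [hcomp]
  simp only [one_smul]
  ring

lemma sum_L_zeta (hK : Fintype.card K = p ^ (2 * m)) (hm : 0 < m)
    (hζ : IsPrimitiveRoot ζ p) {k : ZMod p} (hk : k ≠ 0) {c : K} (hc : c ≠ 0) :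
    ∑ y : K, ζ ^ (k * ph p K (fieldTr p (2 * m) (c * y))).val = 0 := by
  have hcard : p ^ (2 * m - 1) <
      ((Finset.univ : Finset K).image (fun y : K => c * y)).card := by
    rw [Finset.card_image_of_injective _ (mul_right_injective₀ hc), Finset.card_univ, hK]
    exact Nat.pow_lt_pow_right (hp_prime (p := p)).one_lt (by omega)
  obtain ⟨u₀, hu₀mem, hu₀ne⟩ := exists_ftr_ne (2 * m) (by omega) _ hcard
  rw [Finset.mem_image] at hu₀mem
  obtain ⟨y₀, _, rfl⟩ := hu₀mem
  refine sum_zeta_shift hζ _ _ y₀ (fun a _ => Finset.mem_univ _) (fun a _ => Finset.mem_univ _)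
    (s := k * ph p K (fieldTr p (2 * m) (c * y₀))) ?_ ?_
  · exact mul_ne_zero hk fun h =>
      hu₀ne ((ph_eq_zero_iff (TrK_pf hK _)).mp h)
  · intro a _
    rw [mul_add, ftr_add, ph_add (TrK_pf hK _) (TrK_pf hK _), mul_add]

end CharSums

/-! ### Completing the square -/

section CompleteSquare

variable {p m : ℕ} [Fact p.Prime] {K : Type} [Field K] [Fintype K] [DecidableEq K]
  [CharP K p] {ζ : ℂ}

lemma norm_c_eq (hK : Fintype.card K = p ^ (2 * m)) (g : K) :
    (g ^ p ^ m) ^ (p ^ m + 1) = g ^ (p ^ m + 1) := by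
  rw [← pow_mul, mul_comm, pow_mul, norm_mem hK]

lemma TrK_F_elt (hK : Fintype.card K = p ^ (2 * m)) (a : ZMod p) (g : K) :
    fieldTr p (2 * m) (iot p K a * g ^ (p ^ m + 1))
      = iot p K (a + a) * fieldTr p m (g ^ (p ^ m + 1)) := by
  rw [TrK_split hK]
  have h1 : (iot p K a * g ^ (p ^ m + 1)) ^ p ^ m = iot p K a * g ^ (p ^ m + 1) := by
    rw [mul_pow, pow_p_pow_self (iot_pow_p a), norm_mem hK]
  rw [h1]
  have h2 : iot p K a * g ^ (p ^ m + 1) + iot p K a * g ^ (p ^ m + 1)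
      = iot p K (a + a) * g ^ (p ^ m + 1) := by
    rw [map_add]; ring
  rw [h2, ftr_smul (iot_pow_p (a + a))]

lemma sum_QL_zeta (hK : Fintype.card K = p ^ (2 * m)) (hm : 0 < m) (hodd : Odd p)
    (hζ : IsPrimitiveRoot ζ p) (j k : ZMod p) (hj : j ≠ 0) {g : K} (hg : g ≠ 0) :
    ∑ y : K, ζ ^ ((j * ph p K (fieldTr p m (y ^ (p ^ m + 1)))
        + k * ph p K (fieldTr p (2 * m) (g ^ p ^ m * y))).val)
      = ζ ^ ((-(k * k * j⁻¹ * ph p K (fieldTr p m (g ^ (p ^ m + 1))))).val)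
          * (-(p ^ m : ℂ)) := by
  classical
  have hpj : iot p K j ≠ 0 := fun h => hj (iot_injective (by rw [h, map_zero]))
  set c : K := g ^ p ^ m with hc
  set w : K := -(iot p K k * c) * (iot p K j)⁻¹ with hw
  set h : K := w ^ p ^ m with hh
  have hhq : h ^ p ^ m = w := by rw [hh]; exact pow_qq hK w
  have hwq : w ^ p ^ m = -(iot p K k * c ^ p ^ m) * (iot p K j)⁻¹ := by
    rw [hw, mul_pow, inv_pow, pow_p_pow_self (iot_pow_p j)]
    congr 1
    rw [Odd.neg_pow (hodd.pow), mul_pow, pow_p_pow_self (iot_pow_p k)]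
  have hcq : c ^ p ^ m * c = g ^ (p ^ m + 1) := by
    rw [← pow_succ, hc]
    exact norm_c_eq hK g
  have hjw : iot p K j * w = -(iot p K k * c) := by
    rw [hw]
    field_simp
  have e3 : ∀ y : K, iot p K j * fieldTr p (2 * m) (y * w)
      = iot p K (-k) * fieldTr p (2 * m) (c * y) := by
    intro y
    rw [← ftr_smul (iot_pow_p j), ← ftr_smul (iot_pow_p (-k))]
    congr 1
    rw [map_neg]
    calc iot p K j * (y * w) = (iot p K j * w) * y := by ring
    _ = -(iot p K k * c) * y := by rw [hjw]
    _ = -iot p K k * (c * y) := by ring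
  have e4 : h ^ (p ^ m + 1) = iot p K (k * k * (j * j)⁻¹) * g ^ (p ^ m + 1) := by
    have h1 : h ^ (p ^ m + 1) = w ^ (p ^ m + 1) := by rw [hh]; exact norm_c_eq hK w
    have h2 : w ^ (p ^ m + 1) = w ^ p ^ m * w := pow_succ w (p ^ m)
    rw [h1, h2, hwq, hw]
    simp only [map_mul, map_inv₀, mul_inv]
    linear_combination (iot p K k * iot p K k * (iot p K j)⁻¹ * (iot p K j)⁻¹) * hcq
  have e6 : c * h = iot p K (-(k * j⁻¹)) * g ^ (p ^ m + 1) := by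
    rw [hh, hwq]
    simp only [map_neg, map_mul, map_inv₀]
    linear_combination (-(iot p K k * (iot p K j)⁻¹)) * hcq
  have e5 : fieldTr p m (h ^ (p ^ m + 1))
      = iot p K (k * k * (j * j)⁻¹) * fieldTr p m (g ^ (p ^ m + 1)) := by
    rw [e4, ftr_smul (iot_pow_p _)]
  have e7 : fieldTr p (2 * m) (c * h)
      = iot p K ((-(k * j⁻¹)) + (-(k * j⁻¹))) * fieldTr p m (g ^ (p ^ m + 1)) := by
    rw [e6, TrK_F_elt hK]
  have hpoint : ∀ y : K,
      (j * ph p K (fieldTr p m ((y + h) ^ (p ^ m + 1)))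
        + k * ph p K (fieldTr p (2 * m) (c * (y + h))))
      = j * ph p K (fieldTr p m (y ^ (p ^ m + 1)))
        + (-(k * k * j⁻¹ * ph p K (fieldTr p m (g ^ (p ^ m + 1))))) := by
    intro y
    have hQ := Q_expand hK y h
    rw [hhq] at hQ
    have hL : fieldTr p (2 * m) (c * (y + h))
        = fieldTr p (2 * m) (c * y) + fieldTr p (2 * m) (c * h) := by
      rw [mul_add, ftr_add]
    have QpfY := Q_pf hK y
    have Qpfh := Q_pf hK h
    have Qpfg := Q_pf hK g
    have T1 := TrK_pf hK (y * w)
    have T2 := TrK_pf hK (c * y)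
    have T3 := TrK_pf hK (c * h)
    have p1 : ph p K (fieldTr p m ((y + h) ^ (p ^ m + 1)))
        = ph p K (fieldTr p m (y ^ (p ^ m + 1))) + ph p K (fieldTr p m (h ^ (p ^ m + 1)))
          + ph p K (fieldTr p (2 * m) (y * w)) := by
      rw [hQ, ph_add (pf_add QpfY Qpfh) T1, ph_add QpfY Qpfh]
    have p2 : ph p K (fieldTr p (2 * m) (c * (y + h)))
        = ph p K (fieldTr p (2 * m) (c * y)) + ph p K (fieldTr p (2 * m) (c * h)) := by
      rw [hL, ph_add T2 T3]
    have p3 : j * ph p K (fieldTr p (2 * m) (y * w))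
        = -k * ph p K (fieldTr p (2 * m) (c * y)) := by
      have h3 := congrArg (ph p K) (e3 y)
      rw [ph_iot_mul T1 j, ph_iot_mul T2 (-k)] at h3
      exact h3
    have p4 : ph p K (fieldTr p m (h ^ (p ^ m + 1)))
        = (k * k * (j * j)⁻¹) * ph p K (fieldTr p m (g ^ (p ^ m + 1))) := by
      have h4 := congrArg (ph p K) e5
      rw [ph_iot_mul Qpfg] at h4
      exact h4
    have p5 : ph p K (fieldTr p (2 * m) (c * h))
        = ((-(k * j⁻¹)) + (-(k * j⁻¹))) * ph p K (fieldTr p m (g ^ (p ^ m + 1))) := by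
      have h5 := congrArg (ph p K) e7
      rw [ph_iot_mul Qpfg] at h5
      exact h5
    rw [p1, p2, p4, p5]
    linear_combination p3
      + (k * k * j⁻¹ * ph p K (fieldTr p m (g ^ (p ^ m + 1)))) * (mul_inv_cancel₀ hj)
  have hre := Fintype.sum_equiv (Equiv.addRight h)
    (fun x : K => ζ ^ ((j * ph p K (fieldTr p m ((x + h) ^ (p ^ m + 1)))
        + k * ph p K (fieldTr p (2 * m) (c * (x + h)))).val))
    (fun y : K => ζ ^ ((j * ph p K (fieldTr p m (y ^ (p ^ m + 1)))
        + k * ph p K (fieldTr p (2 * m) (c * y))).val))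
    (fun x => rfl)
  rw [← hre]
  have hptw : ∀ x : K,
      ζ ^ ((j * ph p K (fieldTr p m ((x + h) ^ (p ^ m + 1)))
          + k * ph p K (fieldTr p (2 * m) (c * (x + h)))).val)
      = ζ ^ ((j * ph p K (fieldTr p m (x ^ (p ^ m + 1)))).val)
          * ζ ^ ((-(k * k * j⁻¹ * ph p K (fieldTr p m (g ^ (p ^ m + 1))))).val) := by
    intro x
    rw [hpoint x, zeta_val_add hζ]
  rw [Finset.sum_congr rfl fun x _ => hptw x, ← Finset.sum_mul, sum_Q_zeta hK hm hζ hj]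
  ring

end CompleteSquare

/-! ### Master counting -/

section Master

variable {p m : ℕ} [Fact p.Prime] {K : Type} [Field K] [Fintype K] [DecidableEq K]
  [CharP K p] {ζ : ℂ}

lemma T_eval (hζ : IsPrimitiveRoot ζ p) {t₀ : ZMod p} (ht : t₀ ≠ 0) :
    ∑ j ∈ (Finset.univ.erase (0 : ZMod p)), ∑ k : ZMod p,
      ζ ^ ((k * t₀ - k * k * j⁻¹ * t₀).val) = (p : ℂ) := by
  haveI : NeZero p := ⟨(Fact.out : p.Prime).ne_zero⟩
  rw [Finset.sum_comm]
  have hsumfull : ∀ s : ZMod p, ∑ v : ZMod p, ζ ^ ((v * s).val) = if s = 0 then (p:ℂ) else 0 :=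
    sum_zmod_zeta hζ
  have hk : ∀ k : ZMod p, ∑ j ∈ Finset.univ.erase (0 : ZMod p),
      ζ ^ ((k * t₀ - k * k * j⁻¹ * t₀).val)
      = if k = 0 then ((p : ℂ) - 1) else -ζ ^ ((k * t₀).val) := by
    intro k
    by_cases hk0 : k = 0
    · subst hk0
      rw [if_pos rfl]
      have : ∀ j ∈ Finset.univ.erase (0 : ZMod p),
          ζ ^ (((0:ZMod p) * t₀ - 0 * 0 * j⁻¹ * t₀).val) = 1 := by
        intro j _
        norm_num
      rw [Finset.sum_congr rfl this, Finset.sum_const,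
        Finset.card_erase_of_mem (Finset.mem_univ _), Finset.card_univ, ZMod.card]
      simp
      push_cast [(Fact.out : p.Prime).pos]
      ring
    · rw [if_neg hk0]
      have hre : ∑ j ∈ Finset.univ.erase (0 : ZMod p),
          ζ ^ ((k * t₀ - k * k * j⁻¹ * t₀).val)
          = ∑ u ∈ Finset.univ.erase (0 : ZMod p), ζ ^ ((k * t₀ - u * t₀).val) := by
        refine Finset.sum_nbij' (fun j => k * k * j⁻¹) (fun u => k * k * u⁻¹) ?_ ?_ ?_ ?_ ?_
        · intro j hj
          rw [Finset.mem_erase] at hj ⊢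
          exact ⟨mul_ne_zero (mul_ne_zero hk0 hk0) (inv_ne_zero hj.1), Finset.mem_univ _⟩
        · intro u hu
          rw [Finset.mem_erase] at hu ⊢
          exact ⟨mul_ne_zero (mul_ne_zero hk0 hk0) (inv_ne_zero hu.1), Finset.mem_univ _⟩
        · intro j hj
          rw [Finset.mem_erase] at hj
          field_simp
        · intro u hu
          rw [Finset.mem_erase] at hu
          field_simp
        · intro j hj
          rfl
      rw [hre]
      have hfull : ∑ u : ZMod p, ζ ^ ((k * t₀ - u * t₀).val) = 0 := by
        have hcomp : ∀ u : ZMod p,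
            ζ ^ ((k * t₀ - u * t₀).val) = ζ ^ (((k - u) * t₀).val) := by
          intro u; congr 1; ring_nf
        have heq := Fintype.sum_equiv (Equiv.subLeft k)
          (fun u : ZMod p => ζ ^ ((k * t₀ - u * t₀).val))
          (fun v : ZMod p => ζ ^ ((v * t₀).val))
          (fun u => by simpa using hcomp u)
        rw [heq, hsumfull t₀, if_neg ht]
      have hsplit := Finset.add_sum_erase Finset.univ
        (fun u : ZMod p => ζ ^ ((k * t₀ - u * t₀).val)) (Finset.mem_univ 0)
      rw [hfull] at hsplit
      have h00 : ζ ^ ((k * t₀ - (0:ZMod p) * t₀).val) = ζ ^ ((k * t₀).val) := by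
        norm_num
      rw [h00] at hsplit
      linear_combination hsplit
  rw [Finset.sum_congr rfl fun k _ => hk k]
  have hsplit2 := Finset.add_sum_erase Finset.univ
    (fun k : ZMod p => if k = 0 then ((p : ℂ) - 1) else -ζ ^ ((k * t₀).val))
    (Finset.mem_univ 0)
  rw [← hsplit2, if_pos rfl]
  have hrest : ∑ k ∈ Finset.univ.erase (0 : ZMod p),
      (if k = 0 then ((p : ℂ) - 1) else -ζ ^ ((k * t₀).val))
      = ∑ k ∈ Finset.univ.erase (0 : ZMod p), -ζ ^ ((k * t₀).val) := by
    refine Finset.sum_congr rfl fun k hk' => ?_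
    rw [Finset.mem_erase] at hk'
    rw [if_neg hk'.1]
  rw [hrest]
  have hsplit3 := Finset.add_sum_erase Finset.univ
    (fun k : ZMod p => ζ ^ ((k * t₀).val)) (Finset.mem_univ 0)
  rw [hsumfull t₀, if_neg ht] at hsplit3
  have h01 : ζ ^ (((0:ZMod p) * t₀).val) = 1 := by norm_num
  rw [h01] at hsplit3
  have : ∑ k ∈ Finset.univ.erase (0 : ZMod p), -ζ ^ ((k * t₀).val)
      = -∑ k ∈ Finset.univ.erase (0 : ZMod p), ζ ^ ((k * t₀).val) := by
    rw [Finset.sum_neg_distrib]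
  rw [this]
  linear_combination -hsplit3

lemma card_W (hK : Fintype.card K = p ^ (2 * m)) (hm : 0 < m)
    (hζ : IsPrimitiveRoot ζ p) :
    ((((Finset.univ : Finset K).filter fun y => fieldTr p m (y ^ (p ^ m + 1)) = 0).card : ℂ))
        * p = (p : ℂ) ^ (2 * m) - ((p : ℂ) - 1) * (p : ℂ) ^ m := by
  haveI : NeZero p := ⟨(Fact.out : p.Prime).ne_zero⟩
  have hyid : ∀ y : K, (if fieldTr p m (y ^ (p ^ m + 1)) = 0 then (p : ℂ) else 0)
      = ∑ j : ZMod p, ζ ^ ((j * ph p K (fieldTr p m (y ^ (p ^ m + 1)))).val) := by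
    intro y
    rw [sum_zmod_zeta hζ]
    by_cases hQ : fieldTr p m (y ^ (p ^ m + 1)) = 0
    · rw [if_pos hQ, if_pos ((ph_eq_zero_iff (Q_pf hK y)).mpr hQ)]
    · rw [if_neg hQ, if_neg (fun h => hQ ((ph_eq_zero_iff (Q_pf hK y)).mp h))]
  have hLHS : ∑ y : K, (if fieldTr p m (y ^ (p ^ m + 1)) = 0 then (p : ℂ) else 0)
      = ((((Finset.univ : Finset K).filter
          fun y => fieldTr p m (y ^ (p ^ m + 1)) = 0).card : ℂ)) * p := by
    rw [← Finset.sum_filter, Finset.sum_const, nsmul_eq_mul]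
  have hRHS : ∑ y : K, ∑ j : ZMod p, ζ ^ ((j * ph p K (fieldTr p m (y ^ (p ^ m + 1)))).val)
      = (p : ℂ) ^ (2 * m) - ((p : ℂ) - 1) * (p : ℂ) ^ m := by
    rw [Finset.sum_comm]
    have hsplit := Finset.add_sum_erase Finset.univ
      (fun j : ZMod p => ∑ y : K, ζ ^ ((j * ph p K (fieldTr p m (y ^ (p ^ m + 1)))).val))
      (Finset.mem_univ 0)
    rw [← hsplit]
    have h0 : ∑ y : K, ζ ^ (((0:ZMod p) * ph p K (fieldTr p m (y ^ (p ^ m + 1)))).val)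
        = (p : ℂ) ^ (2 * m) := by
      have : ∀ y : K, ζ ^ (((0:ZMod p) * ph p K (fieldTr p m (y ^ (p ^ m + 1)))).val)
          = 1 := by intro y; norm_num
      rw [Finset.sum_congr rfl fun y _ => this y, Finset.sum_const, Finset.card_univ, hK]
      simp
    have hrest : ∑ j ∈ Finset.univ.erase (0 : ZMod p),
        (∑ y : K, ζ ^ ((j * ph p K (fieldTr p m (y ^ (p ^ m + 1)))).val))
        = ∑ j ∈ Finset.univ.erase (0 : ZMod p), -((p:ℂ) ^ m) := by
      refine Finset.sum_congr rfl fun j hj => ?_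
      rw [Finset.mem_erase] at hj
      rw [sum_Q_zeta hK hm hζ hj.1]
    rw [h0, hrest, Finset.sum_const, Finset.card_erase_of_mem (Finset.mem_univ _),
      Finset.card_univ, ZMod.card, nsmul_eq_mul]
    push_cast [(Fact.out : p.Prime).pos]
    ring
  rw [← hLHS, Finset.sum_congr rfl fun y _ => hyid y, hRHS]

end Master

section Master2

variable {p m : ℕ} [Fact p.Prime] {K : Type} [Field K] [Fintype K] [DecidableEq K]
  [CharP K p] {ζ : ℂ}

lemma double_sum_eval (hζ : IsPrimitiveRoot ζ p) (t₀ : ZMod p) :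
    ∑ j ∈ Finset.univ.erase (0 : ZMod p), ∑ k : ZMod p,
      ζ ^ ((k * t₀ - k * k * j⁻¹ * t₀).val)
      = if t₀ = 0 then ((p : ℂ) - 1) * p else (p : ℂ) := by
  haveI : NeZero p := ⟨(Fact.out : p.Prime).ne_zero⟩
  by_cases h : t₀ = 0
  · subst h
    rw [if_pos rfl]
    have h1 : ∀ j ∈ Finset.univ.erase (0 : ZMod p), ∑ k : ZMod p,
        ζ ^ ((k * (0:ZMod p) - k * k * j⁻¹ * 0).val) = (p : ℂ) := by
      intro j _
      have : ∀ k : ZMod p, ζ ^ ((k * (0:ZMod p) - k * k * j⁻¹ * 0).val) = 1 := by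
        intro k; norm_num
      rw [Finset.sum_congr rfl fun k _ => this k, Finset.sum_const, Finset.card_univ,
        ZMod.card]
      simp
    rw [Finset.sum_congr rfl h1, Finset.sum_const,
      Finset.card_erase_of_mem (Finset.mem_univ _), Finset.card_univ, ZMod.card,
      nsmul_eq_mul]
    push_cast [(Fact.out : p.Prime).pos]
    ring
  · rw [if_neg h]
    exact T_eval hζ h

lemma card_Sfull (hK : Fintype.card K = p ^ (2 * m)) (hm : 0 < m) (hodd : Odd p)
    (hζ : IsPrimitiveRoot ζ p) {g : K} (hg : g ≠ 0) :
    ((((Finset.univ : Finset K).filter fun y =>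
        fieldTr p m (y ^ (p ^ m + 1)) = 0 ∧ fieldTr p m ((y + g) ^ (p ^ m + 1)) = 0).card : ℂ))
        * ((p : ℂ) * p)
      = (p : ℂ) ^ (2 * m) - (p : ℂ) ^ m *
          (if fieldTr p m (g ^ (p ^ m + 1)) = 0 then ((p : ℂ) - 1) * p else (p : ℂ)) := by
  haveI : NeZero p := ⟨(Fact.out : p.Prime).ne_zero⟩
  -- Step 1: rewrite the filter condition
  have hset : ((Finset.univ : Finset K).filter fun y =>
        fieldTr p m (y ^ (p ^ m + 1)) = 0 ∧ fieldTr p m ((y + g) ^ (p ^ m + 1)) = 0)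
      = ((Finset.univ : Finset K).filter fun y =>
        fieldTr p m (y ^ (p ^ m + 1)) = 0 ∧
          fieldTr p (2 * m) (g ^ p ^ m * y) = -fieldTr p m (g ^ (p ^ m + 1))) := by
    ext y
    simp only [Finset.mem_filter, Finset.mem_univ, true_and]
    have hy := Q_expand hK y g
    rw [mul_comm y (g ^ p ^ m)] at hy
    constructor
    · rintro ⟨h1, h2⟩
      refine ⟨h1, ?_⟩
      rw [hy, h1] at h2
      linear_combination h2
    · rintro ⟨h1, h2⟩
      refine ⟨h1, ?_⟩
      rw [hy, h1, h2]
      ring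
  -- Step 2: pointwise character identity
  have hyid : ∀ y : K,
      (if (fieldTr p m (y ^ (p ^ m + 1)) = 0 ∧
          fieldTr p (2 * m) (g ^ p ^ m * y) = -fieldTr p m (g ^ (p ^ m + 1)))
        then ((p : ℂ) * p) else 0)
      = ∑ j : ZMod p, ∑ k : ZMod p,
          ζ ^ ((j * ph p K (fieldTr p m (y ^ (p ^ m + 1)))).val)
            * ζ ^ ((k * ph p K (fieldTr p (2 * m) (g ^ p ^ m * y))).val)
            * ζ ^ ((k * ph p K (fieldTr p m (g ^ (p ^ m + 1)))).val) := by
    intro y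
    have hA : ∑ j : ZMod p, ζ ^ ((j * ph p K (fieldTr p m (y ^ (p ^ m + 1)))).val)
        = if fieldTr p m (y ^ (p ^ m + 1)) = 0 then (p : ℂ) else 0 := by
      rw [sum_zmod_zeta hζ]
      by_cases hQ : fieldTr p m (y ^ (p ^ m + 1)) = 0
      · rw [if_pos hQ, if_pos ((ph_eq_zero_iff (Q_pf hK y)).mpr hQ)]
      · rw [if_neg hQ, if_neg (fun h => hQ ((ph_eq_zero_iff (Q_pf hK y)).mp h))]
    have hB : ∑ k : ZMod p,
        ζ ^ ((k * ph p K (fieldTr p (2 * m) (g ^ p ^ m * y))).val)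
          * ζ ^ ((k * ph p K (fieldTr p m (g ^ (p ^ m + 1)))).val)
        = if fieldTr p (2 * m) (g ^ p ^ m * y) = -fieldTr p m (g ^ (p ^ m + 1))
            then (p : ℂ) else 0 := by
      have hmerge : ∀ k : ZMod p,
          ζ ^ ((k * ph p K (fieldTr p (2 * m) (g ^ p ^ m * y))).val)
            * ζ ^ ((k * ph p K (fieldTr p m (g ^ (p ^ m + 1)))).val)
          = ζ ^ ((k * (ph p K (fieldTr p (2 * m) (g ^ p ^ m * y))
              + ph p K (fieldTr p m (g ^ (p ^ m + 1))))).val) := by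
        intro k
        rw [← zeta_val_add hζ]
        congr 1
        ring
      rw [Finset.sum_congr rfl fun k _ => hmerge k, sum_zmod_zeta hζ]
      have hiff : (ph p K (fieldTr p (2 * m) (g ^ p ^ m * y))
          + ph p K (fieldTr p m (g ^ (p ^ m + 1))) = 0)
          ↔ (fieldTr p (2 * m) (g ^ p ^ m * y) = -fieldTr p m (g ^ (p ^ m + 1))) := by
        constructor
        · intro h
          have h2 : ph p K (fieldTr p (2 * m) (g ^ p ^ m * y)
              + fieldTr p m (g ^ (p ^ m + 1))) = 0 := by
            rw [ph_add (TrK_pf hK _) (Q_pf hK g)]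
            exact h
          have h3 := (ph_eq_zero_iff (pf_add (TrK_pf hK _) (Q_pf hK g))).mp h2
          linear_combination h3
        · intro h
          rw [← ph_add (TrK_pf hK _) (Q_pf hK g)]
          have h4 : fieldTr p (2 * m) (g ^ p ^ m * y)
              + fieldTr p m (g ^ (p ^ m + 1)) = 0 := by rw [h]; ring
          rw [h4, ph_zero]
      by_cases hC : fieldTr p (2 * m) (g ^ p ^ m * y) = -fieldTr p m (g ^ (p ^ m + 1))
      · rw [if_pos hC, if_pos (hiff.mpr hC)]
      · rw [if_neg hC, if_neg (fun h => hC (hiff.mp h))]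
    have hprod : (if (fieldTr p m (y ^ (p ^ m + 1)) = 0 ∧
          fieldTr p (2 * m) (g ^ p ^ m * y) = -fieldTr p m (g ^ (p ^ m + 1)))
        then ((p : ℂ) * p) else 0)
        = (if fieldTr p m (y ^ (p ^ m + 1)) = 0 then (p : ℂ) else 0)
          * (if fieldTr p (2 * m) (g ^ p ^ m * y) = -fieldTr p m (g ^ (p ^ m + 1))
              then (p : ℂ) else 0) := by
      by_cases h1 : fieldTr p m (y ^ (p ^ m + 1)) = 0 <;>
        by_cases h2 : fieldTr p (2 * m) (g ^ p ^ m * y)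
          = -fieldTr p m (g ^ (p ^ m + 1)) <;>
        simp [h1, h2]
    rw [hprod, ← hA, ← hB, Finset.sum_mul_sum]
    refine Finset.sum_congr rfl fun j _ => Finset.sum_congr rfl fun k _ => ?_
    ring
  -- Step 3: sum over y and swap
  have hLHS : ∑ y : K, (if (fieldTr p m (y ^ (p ^ m + 1)) = 0 ∧
        fieldTr p (2 * m) (g ^ p ^ m * y) = -fieldTr p m (g ^ (p ^ m + 1)))
      then ((p : ℂ) * p) else 0)
      = ((((Finset.univ : Finset K).filter fun y =>
        fieldTr p m (y ^ (p ^ m + 1)) = 0 ∧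
          fieldTr p (2 * m) (g ^ p ^ m * y) = -fieldTr p m (g ^ (p ^ m + 1))).card : ℂ))
          * ((p : ℂ) * p) := by
    rw [← Finset.sum_filter, Finset.sum_const, nsmul_eq_mul]
  -- inner sums
  have hinner : ∀ j : ZMod p, ∀ k : ZMod p,
      ∑ y : K, ζ ^ ((j * ph p K (fieldTr p m (y ^ (p ^ m + 1)))).val)
        * ζ ^ ((k * ph p K (fieldTr p (2 * m) (g ^ p ^ m * y))).val)
        * ζ ^ ((k * ph p K (fieldTr p m (g ^ (p ^ m + 1)))).val)
      = (∑ y : K, ζ ^ ((j * ph p K (fieldTr p m (y ^ (p ^ m + 1)))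
          + k * ph p K (fieldTr p (2 * m) (g ^ p ^ m * y))).val))
        * ζ ^ ((k * ph p K (fieldTr p m (g ^ (p ^ m + 1)))).val) := by
    intro j k
    rw [Finset.sum_mul]
    refine Finset.sum_congr rfl fun y _ => ?_
    rw [zeta_val_add hζ]
  -- Row j = 0
  have hRow0 : ∑ k : ZMod p,
      (∑ y : K, ζ ^ (((0:ZMod p) * ph p K (fieldTr p m (y ^ (p ^ m + 1)))
          + k * ph p K (fieldTr p (2 * m) (g ^ p ^ m * y))).val))
        * ζ ^ ((k * ph p K (fieldTr p m (g ^ (p ^ m + 1)))).val)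
      = (p : ℂ) ^ (2 * m) := by
    have hsplitk := Finset.add_sum_erase Finset.univ
      (fun k : ZMod p =>
        (∑ y : K, ζ ^ (((0:ZMod p) * ph p K (fieldTr p m (y ^ (p ^ m + 1)))
          + k * ph p K (fieldTr p (2 * m) (g ^ p ^ m * y))).val))
        * ζ ^ ((k * ph p K (fieldTr p m (g ^ (p ^ m + 1)))).val)) (Finset.mem_univ 0)
    rw [← hsplitk]
    have hk0 : (∑ y : K, ζ ^ (((0:ZMod p) * ph p K (fieldTr p m (y ^ (p ^ m + 1)))
          + (0:ZMod p) * ph p K (fieldTr p (2 * m) (g ^ p ^ m * y))).val))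
        * ζ ^ (((0:ZMod p) * ph p K (fieldTr p m (g ^ (p ^ m + 1)))).val)
        = (p : ℂ) ^ (2 * m) := by
      have h1 : ∀ y : K, ζ ^ (((0:ZMod p) * ph p K (fieldTr p m (y ^ (p ^ m + 1)))
          + (0:ZMod p) * ph p K (fieldTr p (2 * m) (g ^ p ^ m * y))).val) = 1 := by
        intro y; norm_num
      rw [Finset.sum_congr rfl fun y _ => h1 y, Finset.sum_const, Finset.card_univ, hK]
      norm_num
    have hkne : ∀ k ∈ Finset.univ.erase (0 : ZMod p),
        (∑ y : K, ζ ^ (((0:ZMod p) * ph p K (fieldTr p m (y ^ (p ^ m + 1)))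
          + k * ph p K (fieldTr p (2 * m) (g ^ p ^ m * y))).val))
        * ζ ^ ((k * ph p K (fieldTr p m (g ^ (p ^ m + 1)))).val) = 0 := by
      intro k hk
      rw [Finset.mem_erase] at hk
      have hzero_exp : ∀ y : K,
          ζ ^ (((0:ZMod p) * ph p K (fieldTr p m (y ^ (p ^ m + 1)))
            + k * ph p K (fieldTr p (2 * m) (g ^ p ^ m * y))).val)
          = ζ ^ ((k * ph p K (fieldTr p (2 * m) (g ^ p ^ m * y))).val) := by
        intro y
        norm_num
      rw [Finset.sum_congr rfl fun y _ => hzero_exp y,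
        sum_L_zeta hK hm hζ hk.1 (pow_ne_zero _ hg), zero_mul]
    rw [hk0, Finset.sum_eq_zero hkne, add_zero]
  -- Rows j ≠ 0
  have hRowj : ∀ j ∈ Finset.univ.erase (0 : ZMod p),
      (∑ k : ZMod p,
        (∑ y : K, ζ ^ ((j * ph p K (fieldTr p m (y ^ (p ^ m + 1)))
            + k * ph p K (fieldTr p (2 * m) (g ^ p ^ m * y))).val))
          * ζ ^ ((k * ph p K (fieldTr p m (g ^ (p ^ m + 1)))).val))
      = -((p:ℂ)^m) * ∑ k : ZMod p,
          ζ ^ ((k * ph p K (fieldTr p m (g ^ (p ^ m + 1)))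
            - k * k * j⁻¹ * ph p K (fieldTr p m (g ^ (p ^ m + 1)))).val) := by
    intro j hj
    rw [Finset.mem_erase] at hj
    rw [Finset.mul_sum]
    refine Finset.sum_congr rfl fun k _ => ?_
    rw [sum_QL_zeta hK hm hodd hζ j k hj.1 hg]
    have hexp : (k * ph p K (fieldTr p m (g ^ (p ^ m + 1)))
        - k * k * j⁻¹ * ph p K (fieldTr p m (g ^ (p ^ m + 1))))
        = (-(k * k * j⁻¹ * ph p K (fieldTr p m (g ^ (p ^ m + 1)))))
          + k * ph p K (fieldTr p m (g ^ (p ^ m + 1))) := by ring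
    rw [hexp, zeta_val_add hζ]
    ring
  -- assemble
  rw [hset, ← hLHS, Finset.sum_congr rfl fun y _ => hyid y, Finset.sum_comm]
  rw [Finset.sum_congr rfl fun j (_ : j ∈ Finset.univ) => (Finset.sum_comm : _ = _)]
  rw [Finset.sum_congr rfl fun j (_ : j ∈ Finset.univ) =>
    Finset.sum_congr rfl fun k _ => hinner j k]
  have hsplitj := Finset.add_sum_erase Finset.univ
    (fun j : ZMod p => ∑ k : ZMod p,
      (∑ y : K, ζ ^ ((j * ph p K (fieldTr p m (y ^ (p ^ m + 1)))
          + k * ph p K (fieldTr p (2 * m) (g ^ p ^ m * y))).val))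
        * ζ ^ ((k * ph p K (fieldTr p m (g ^ (p ^ m + 1)))).val)) (Finset.mem_univ 0)
  rw [← hsplitj, hRow0, Finset.sum_congr rfl hRowj, ← Finset.mul_sum,
    double_sum_eval hζ (ph p K (fieldTr p m (g ^ (p ^ m + 1))))]
  have hcondeq : (if ph p K (fieldTr p m (g ^ (p ^ m + 1))) = 0
        then ((p:ℂ) - 1) * p else (p:ℂ))
      = (if fieldTr p m (g ^ (p ^ m + 1)) = 0 then ((p:ℂ) - 1) * p else (p:ℂ)) := by
    by_cases h : fieldTr p m (g ^ (p ^ m + 1)) = 0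
    · rw [if_pos h, if_pos ((ph_eq_zero_iff (Q_pf hK g)).mpr h)]
    · rw [if_neg h, if_neg (fun hh => h ((ph_eq_zero_iff (Q_pf hK g)).mp hh))]
  rw [hcondeq]
  ring

end Master2

end DennistonAux

theorem denniston_stmt6 (p m : ℕ) (hp : p.Prime) (hodd : Odd p) (hm : 2 ≤ m)
    (K : Type) [Field K] [Fintype K] [DecidableEq K]
    (hK : Fintype.card K = p ^ (2 * m)) :
    IsPDS (Finset.univ.filter
        (fun x : K => x ≠ 0 ∧ fieldTr p m (x ^ (p ^ m + 1)) = 0))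
      (p ^ (2 * m))
      (p ^ (2 * m - 1) - p ^ (m - 1) * (p - 1) - 1)
      (p ^ (2 * m - 2) - p ^ (m - 1) * (p - 1) - 2)
      (p ^ (2 * m - 2) - p ^ (m - 1)) := by
  classical
  haveI hfact : Fact p.Prime := ⟨hp⟩
  obtain ⟨c0, hc0⟩ := CharP.exists K
  haveI := hc0
  obtain ⟨n, hcp, hcard⟩ := FiniteField.card K c0
  have hc0p : c0 = p := by
    have h1 : c0 ∣ p ^ (2 * m) := by
      rw [← hK, hcard]
      exact dvd_pow_self c0 n.2.ne'
    have h2 : c0 ∣ p := hcp.dvd_of_dvd_pow h1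
    exact (Nat.prime_dvd_prime_iff_eq hcp hp).mp h2
  subst hc0p
  obtain ⟨ζ, hζ⟩ : ∃ ζ : ℂ, IsPrimitiveRoot ζ c0 :=
    ⟨_, Complex.isPrimitiveRoot_exp c0 hcp.ne_zero⟩
  -- rename for readability
  have hm1 : 0 < m := by omega
  have hp0 : (c0 : ℂ) ≠ 0 := Nat.cast_ne_zero.mpr hcp.ne_zero
  have e2m : (c0 : ℂ) ^ (2 * m) = (c0 : ℂ) ^ (2 * m - 2) * c0 * c0 := by
    rw [← pow_succ, ← pow_succ]
    congr 1
    omega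
  have e2m1 : (c0 : ℂ) ^ (2 * m) = (c0 : ℂ) ^ (2 * m - 1) * c0 := by
    rw [← pow_succ]
    congr 1
    omega
  have em : (c0 : ℂ) ^ m = (c0 : ℂ) ^ (m - 1) * c0 := by
    rw [← pow_succ]
    congr 1
    omega
  have hpm : c0 ^ (m - 1) * c0 = c0 ^ m := by
    rw [← pow_succ]
    congr 1
    omega
  have hineqm : c0 ^ (m - 1) * (c0 - 1) ≤ c0 ^ m := by
    calc c0 ^ (m - 1) * (c0 - 1) ≤ c0 ^ (m - 1) * c0 :=
          Nat.mul_le_mul_left _ (by omega)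
    _ = c0 ^ m := hpm
  have hineq1 : c0 ^ (m - 1) * (c0 - 1) ≤ c0 ^ (2 * m - 1) :=
    le_trans hineqm (Nat.pow_le_pow_right hcp.one_le (by omega))
  have hineq2 : c0 ^ (m - 1) * (c0 - 1) ≤ c0 ^ (2 * m - 2) :=
    le_trans hineqm (Nat.pow_le_pow_right hcp.one_le (by omega))
  have hineq3 : c0 ^ (m - 1) ≤ c0 ^ (2 * m - 2) :=
    Nat.pow_le_pow_right hcp.one_le (by omega)
  -- the quadric cardinality
  have hWc : (((Finset.univ : Finset K).filter
      fun y => fieldTr c0 m (y ^ (c0 ^ m + 1)) = 0).card)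
      = c0 ^ (2 * m - 1) - c0 ^ (m - 1) * (c0 - 1) := by
    have hcw := DennistonAux.card_W (ζ := ζ) hK hm1 hζ
    have htgt : (((c0 ^ (2 * m - 1) - c0 ^ (m - 1) * (c0 - 1) : ℕ)) : ℂ) * c0
        = (c0 : ℂ) ^ (2 * m) - ((c0 : ℂ) - 1) * (c0 : ℂ) ^ m := by
      push_cast [Nat.cast_sub hineq1, Nat.cast_sub hcp.one_le]
      rw [e2m1, em]
      ring
    have hcc := hcw.trans htgt.symm
    exact Nat.cast_inj.mp (mul_right_cancel₀ hp0 hcc)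
  refine ⟨hK, ?_, ?_⟩
  · -- cardinality of X
    have hXW : (Finset.univ.filter
        (fun x : K => x ≠ 0 ∧ fieldTr c0 m (x ^ (c0 ^ m + 1)) = 0))
        = ((Finset.univ : Finset K).filter
            fun y => fieldTr c0 m (y ^ (c0 ^ m + 1)) = 0).erase 0 := by
      ext x
      simp only [Finset.mem_filter, Finset.mem_univ, true_and, Finset.mem_erase]
    have h0W : (0 : K) ∈ (Finset.univ : Finset K).filter
        (fun y => fieldTr c0 m (y ^ (c0 ^ m + 1)) = 0) := by
      rw [Finset.mem_filter]
      exact ⟨Finset.mem_univ _,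
        by rw [zero_pow (by omega : c0 ^ m + 1 ≠ 0), DennistonAux.ftr_zero]⟩
    rw [hXW, Finset.card_erase_of_mem h0W, hWc]
  · intro g hg
    have hmemD : g ∈ Finset.univ.filter
        (fun x : K => x ≠ 0 ∧ fieldTr c0 m (x ^ (c0 ^ m + 1)) = 0)
        ↔ fieldTr c0 m (g ^ (c0 ^ m + 1)) = 0 := by
      simp [Finset.mem_filter, hg]
    have hpaircard : (((Finset.univ.filter
          (fun x : K => x ≠ 0 ∧ fieldTr c0 m (x ^ (c0 ^ m + 1)) = 0)) ×ˢ
          (Finset.univ.filter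
          (fun x : K => x ≠ 0 ∧ fieldTr c0 m (x ^ (c0 ^ m + 1)) = 0))).filter
            fun q => q.1 - q.2 = g).card
        = ((Finset.univ : Finset K).filter fun y =>
            (y ≠ 0 ∧ fieldTr c0 m (y ^ (c0 ^ m + 1)) = 0) ∧
            (y + g ≠ 0 ∧ fieldTr c0 m ((y + g) ^ (c0 ^ m + 1)) = 0)).card := by
      refine Finset.card_nbij' (fun q => q.2) (fun y => (y + g, y)) ?_ ?_ ?_ ?_
      · intro q hq
        simp only [Finset.mem_coe] at hq ⊢
        rw [Finset.mem_filter, Finset.mem_product] at hq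
        obtain ⟨⟨hq1, hq2⟩, hq3⟩ := hq
        rw [Finset.mem_filter] at hq1 hq2 ⊢
        refine ⟨Finset.mem_univ _, hq2.2, ?_⟩
        have hq1' : q.2 + g = q.1 := by rw [← hq3]; ring
        rw [hq1']
        exact hq1.2
      · intro y hy
        simp only [Finset.mem_coe] at hy ⊢
        rw [Finset.mem_filter] at hy
        rw [Finset.mem_filter, Finset.mem_product]
        constructor
        · constructor
          · rw [Finset.mem_filter]
            exact ⟨Finset.mem_univ _, hy.2.2⟩
          · rw [Finset.mem_filter]
            exact ⟨Finset.mem_univ _, hy.2.1⟩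
        · show y + g - y = g
          ring
      · intro q hq
        simp only [Finset.mem_coe] at hq
        rw [Finset.mem_filter] at hq
        have h1 : q.2 + g = q.1 := by rw [← hq.2]; ring
        exact Prod.ext h1 rfl
      · intro y hy
        rfl
    rw [hpaircard]
    have hSc := DennistonAux.card_Sfull hK hm1 hodd hζ hg
    have hEven : Even (c0 ^ m + 1) := by
      have : Odd (c0 ^ m) := hodd.pow
      exact this.add_one
    have hQneg : fieldTr c0 m ((-g) ^ (c0 ^ m + 1)) = fieldTr c0 m (g ^ (c0 ^ m + 1)) := by
      rw [hEven.neg_pow]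
    by_cases hQg : fieldTr c0 m (g ^ (c0 ^ m + 1)) = 0
    · rw [if_pos (hmemD.mpr hQg), if_pos hQg] at *
      have hA : (((Finset.univ : Finset K).filter fun y =>
          fieldTr c0 m (y ^ (c0 ^ m + 1)) = 0 ∧
            fieldTr c0 m ((y + g) ^ (c0 ^ m + 1)) = 0).card)
          = c0 ^ (2 * m - 2) - c0 ^ (m - 1) * (c0 - 1) := by
        have htgt : (((c0 ^ (2 * m - 2) - c0 ^ (m - 1) * (c0 - 1) : ℕ)) : ℂ)
            * ((c0 : ℂ) * c0)
            = (c0 : ℂ) ^ (2 * m) - (c0 : ℂ) ^ m * (((c0 : ℂ) - 1) * c0) := by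
          push_cast [Nat.cast_sub hineq2, Nat.cast_sub hcp.one_le]
          rw [e2m, em]
          ring
        have hcc := hSc.trans htgt.symm
        exact Nat.cast_inj.mp (mul_right_cancel₀ (mul_ne_zero hp0 hp0) hcc)
      have hsub : ({0, -g} : Finset K) ⊆ (Finset.univ : Finset K).filter fun y =>
          fieldTr c0 m (y ^ (c0 ^ m + 1)) = 0 ∧
            fieldTr c0 m ((y + g) ^ (c0 ^ m + 1)) = 0 := by
        intro x hx
        rw [Finset.mem_insert, Finset.mem_singleton] at hx
        rw [Finset.mem_filter]
        rcases hx with rfl | rfl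
        · refine ⟨Finset.mem_univ _, ?_, ?_⟩
          · rw [zero_pow (by omega : c0 ^ m + 1 ≠ 0), DennistonAux.ftr_zero]
          · rw [zero_add]
            exact hQg
        · refine ⟨Finset.mem_univ _, ?_, ?_⟩
          · rw [hQneg]
            exact hQg
          · rw [neg_add_cancel, zero_pow (by omega : c0 ^ m + 1 ≠ 0),
              DennistonAux.ftr_zero]
      have hpairc : ({0, -g} : Finset K).card = 2 := by
        rw [Finset.card_insert_of_notMem (by simp [hg]), Finset.card_singleton]
      have hYeq : ((Finset.univ : Finset K).filter fun y =>
            (y ≠ 0 ∧ fieldTr c0 m (y ^ (c0 ^ m + 1)) = 0) ∧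
            (y + g ≠ 0 ∧ fieldTr c0 m ((y + g) ^ (c0 ^ m + 1)) = 0))
          = ((Finset.univ : Finset K).filter fun y =>
              fieldTr c0 m (y ^ (c0 ^ m + 1)) = 0 ∧
                fieldTr c0 m ((y + g) ^ (c0 ^ m + 1)) = 0) \ ({0, -g} : Finset K) := by
        ext y
        simp only [Finset.mem_filter, Finset.mem_univ, true_and, Finset.mem_sdiff,
          Finset.mem_insert, Finset.mem_singleton]
        constructor
        · rintro ⟨⟨hy0, hyQ⟩, hyg0, hygQ⟩
          refine ⟨⟨hyQ, hygQ⟩, ?_⟩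
          push_neg
          refine ⟨hy0, fun h => hyg0 ?_⟩
          rw [h, neg_add_cancel]
        · rintro ⟨⟨hyQ, hygQ⟩, hno⟩
          push_neg at hno
          exact ⟨⟨hno.1, hyQ⟩,
            fun h => hno.2 (eq_neg_of_add_eq_zero_left h), hygQ⟩
      rw [hYeq, Finset.card_sdiff_of_subset hsub, hA, hpairc]
    · rw [if_neg (fun h => hQg (hmemD.mp h)), if_neg hQg] at *
      have hA : (((Finset.univ : Finset K).filter fun y =>
          fieldTr c0 m (y ^ (c0 ^ m + 1)) = 0 ∧
            fieldTr c0 m ((y + g) ^ (c0 ^ m + 1)) = 0).card)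
          = c0 ^ (2 * m - 2) - c0 ^ (m - 1) := by
        have htgt : (((c0 ^ (2 * m - 2) - c0 ^ (m - 1) : ℕ)) : ℂ) * ((c0 : ℂ) * c0)
            = (c0 : ℂ) ^ (2 * m) - (c0 : ℂ) ^ m * (c0 : ℂ) := by
          push_cast [Nat.cast_sub hineq3]
          rw [e2m, em]
          ring
        have hcc := hSc.trans htgt.symm
        exact Nat.cast_inj.mp (mul_right_cancel₀ (mul_ne_zero hp0 hp0) hcc)
      have hYeq : ((Finset.univ : Finset K).filter fun y =>
            (y ≠ 0 ∧ fieldTr c0 m (y ^ (c0 ^ m + 1)) = 0) ∧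
            (y + g ≠ 0 ∧ fieldTr c0 m ((y + g) ^ (c0 ^ m + 1)) = 0))
          = ((Finset.univ : Finset K).filter fun y =>
              fieldTr c0 m (y ^ (c0 ^ m + 1)) = 0 ∧
                fieldTr c0 m ((y + g) ^ (c0 ^ m + 1)) = 0) := by
        ext y
        simp only [Finset.mem_filter, Finset.mem_univ, true_and]
        constructor
        · rintro ⟨⟨_, hyQ⟩, _, hygQ⟩
          exact ⟨hyQ, hygQ⟩
        · rintro ⟨hyQ, hygQ⟩
          refine ⟨⟨?_, hyQ⟩, ?_, hygQ⟩
          · intro h0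
            rw [h0, zero_add] at hygQ
            exact hQg hygQ
          · intro h0
            have : y = -g := eq_neg_of_add_eq_zero_left h0
            rw [this, hQneg] at hyQ
            exact hQg hyQ
      rw [hYeq, hA]
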